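/- Let N = 2^{2n} and M = 2^n, and let 1 ≤ q ≤ M. For a uniformly random permutation Π of {0,1}^{2n}, fix distinct inputs ω_1*ρ, ..., ω_q*ρ (all with the same right half ρ). Then the probability that the q values ω_i ⊕ (Π(ω_i*ρ))_L ∈ {0,1}^n are pairwise distinct is at most ∏_{k=1}^{q−1} (1 − k(M−1)/(N−k)) ≤ e^{−q(q−1)/(2(M+1))}. -/

import Mathlib

open Finset

lemma add_self_zero {n : ℕ} (a : Fin n → ZMod 2) : a + a = 0 := by
  funext i
  have : ∀ x : ZMod 2, x + x = 0 := by decide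
  exact this _

lemma add_eq_iff {n : ℕ} (a x v : Fin n → ZMod 2) : a + x = v ↔ x = a + v := by
  constructor
  · rintro rfl; rw [← add_assoc, add_self_zero, zero_add]
  · rintro rfl; rw [← add_assoc, add_self_zero, zero_add]

lemma aux_countD (n : ℕ) : ∀ (q : ℕ) (ω : Fin q → (Fin n → ZMod 2)),
    Function.Injective ω →
    (Finset.univ.filter (fun f : Fin q → ((Fin n → ZMod 2) × (Fin n → ZMod 2)) =>
       Function.Injective (fun i => ω i + (f i).1))).card
     = ∏ k ∈ Finset.range q, (2 ^ (2 * n) - k * 2 ^ n) := by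
  intro q
  induction q with
  | zero =>
    intro ω hω
    have hall : ∀ f : Fin 0 → ((Fin n → ZMod 2) × (Fin n → ZMod 2)),
        Function.Injective (fun i => ω i + (f i).1) := fun f a => a.elim0
    rw [Finset.filter_true_of_mem (fun f _ => hall f)]
    simp
  | succ q ih =>
    intro ω hω
    have hq : q + 1 ≤ 2 ^ n := by
      have := Fintype.card_le_of_injective ω hω
      simpa using this
    classical
    set S := ((Fin n → ZMod 2) × (Fin n → ZMod 2))
    set D1 : Finset (Fin (q + 1) → S) :=
      Finset.univ.filter (fun f => Function.Injective (fun i => ω i + (f i).1)) with hD1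
    set ω' : Fin q → (Fin n → ZMod 2) := ω ∘ Fin.succ with hω'def
    have hω' : Function.Injective ω' := hω.comp (Fin.succ_injective q)
    set D0 : Finset (Fin q → S) :=
      Finset.univ.filter (fun f => Function.Injective (fun i => ω' i + (f i).1)) with hD0
    have hmap : ∀ f ∈ D1, (f ∘ Fin.succ) ∈ D0 := by
      intro f hf
      rw [hD1, Finset.mem_filter] at hf
      rw [hD0, Finset.mem_filter]
      refine ⟨Finset.mem_univ _, ?_⟩
      have : (fun i => ω' i + ((f ∘ Fin.succ) i).1)
          = (fun i => ω i + (f i).1) ∘ Fin.succ := rfl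
      rw [this]
      exact hf.2.comp (Fin.succ_injective q)
    rw [Finset.card_eq_sum_card_fiberwise hmap]
    have hfib : ∀ f₀ ∈ D0, (D1.filter (fun f => f ∘ Fin.succ = f₀)).card
        = (2 ^ n - q) * 2 ^ n := by
      intro f₀ hf₀
      rw [hD0, Finset.mem_filter] at hf₀
      have htinj : Function.Injective (fun i => ω' i + (f₀ i).1) := hf₀.2
      set W : Finset (Fin n → ZMod 2) :=
        Finset.image (fun i : Fin q => ω 0 + (ω' i + (f₀ i).1)) Finset.univ with hW
      set A : Finset S := Finset.univ.filter (fun y : S => y.1 ∉ W) with hA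
      have hcomb : ∀ y : S,
          Function.Injective (fun i : Fin (q+1) => ω i + ((Fin.cons y f₀ : Fin (q+1) → S) i).1)
          ↔ y.1 ∉ W := by
        intro y
        have hfun : (fun i : Fin (q+1) => ω i + ((Fin.cons y f₀ : Fin (q+1) → S) i).1)
            = Fin.cons (ω 0 + y.1) (fun i => ω' i + (f₀ i).1) := by
          funext i
          refine Fin.cases ?_ ?_ i
          · simp [hω'def]
          · intro j; simp [hω'def]
        rw [hfun, Fin.cons_injective_iff]
        constructor
        · rintro ⟨hnr, _⟩ hmem
          rw [hW, Finset.mem_image] at hmem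
          obtain ⟨i, _, hi⟩ := hmem
          exact hnr ⟨i, (add_eq_iff _ _ _).1 hi⟩
        · intro hmem
          refine ⟨?_, htinj⟩
          rintro ⟨i, hi⟩
          apply hmem
          rw [hW, Finset.mem_image]
          exact ⟨i, Finset.mem_univ _, (add_eq_iff _ _ _).2 hi⟩
      have hbij : (D1.filter (fun f => f ∘ Fin.succ = f₀)).card = A.card := by
        apply Finset.card_bij' (fun f _ => f 0)
          (fun y _ => (Fin.cons y f₀ : Fin (q+1) → S))
        · intro f hf
          rw [Finset.mem_filter, hD1, Finset.mem_filter] at hf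
          obtain ⟨⟨-, hinj⟩, htail⟩ := hf
          rw [hA, Finset.mem_filter]
          refine ⟨Finset.mem_univ _, ?_⟩
          have : f = Fin.cons (f 0) f₀ := by
            rw [← htail]; exact (Fin.cons_self_tail f).symm
          rw [this] at hinj
          exact (hcomb (f 0)).1 hinj
        · intro y hy
          rw [hA, Finset.mem_filter] at hy
          rw [Finset.mem_filter, hD1, Finset.mem_filter]
          refine ⟨⟨Finset.mem_univ _, (hcomb y).2 hy.2⟩, ?_⟩
          funext i; simp
        · intro f hf
          rw [Finset.mem_filter] at hf
          rw [← hf.2]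
          exact Fin.cons_self_tail f
        · intro y hy
          simp
      rw [hbij]
      have hAsplit : A = (Finset.univ.filter (fun x : Fin n → ZMod 2 => x ∉ W)) ×ˢ
          (Finset.univ : Finset (Fin n → ZMod 2)) := by
        ext y
        rw [hA, Finset.mem_filter, Finset.mem_product, Finset.mem_filter]
        simp
      have hWcard : W.card = q := by
        rw [hW, Finset.card_image_of_injective _ ?_, Finset.card_univ, Fintype.card_fin]
        intro i j hij
        exact htinj (by simpa using hij)
      have : (Finset.univ.filter (fun x : Fin n → ZMod 2 => x ∉ W)) = Wᶜ := by
        ext x; simp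
      have hcard : Fintype.card (Fin n → ZMod 2) = 2 ^ n := by simp
      rw [hAsplit, Finset.card_product, this, Finset.card_compl, hWcard, Finset.card_univ, hcard]
    rw [Finset.sum_congr rfl hfib, Finset.sum_const, smul_eq_mul, ih ω' hω',
      Finset.prod_range_succ]
    have : (2 ^ n - q) * 2 ^ n = 2 ^ (2 * n) - q * 2 ^ n := by
      rw [Nat.sub_mul, two_mul, pow_add]
    rw [this]

lemma aux_fiber {S : Type*} [Fintype S] [DecidableEq S] {q : ℕ}
    (g f : Fin q → S) (hg : Function.Injective g) (hf : Function.Injective f) :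
    Fintype.card {P : Equiv.Perm S // ∀ i, P (g i) = f i} = Nat.factorial (Fintype.card S - q) := by
  classical
  set e₀ : (Set.range g) ≃ (Set.range f) :=
    (Equiv.ofInjective g hg).symm.trans (Equiv.ofInjective f hf) with he₀
  have key : ∀ P : Equiv.Perm S, (∀ i, P (g i) = f i) ↔ (∀ x : Set.range g, P x = e₀ x) := by
    intro P
    constructor
    · rintro h ⟨_, i, rfl⟩
      have h2 : (Equiv.ofInjective g hg).symm ⟨g i, Set.mem_range_self i⟩ = i := by
        rw [Equiv.symm_apply_eq]; rfl
      simp only [he₀, Equiv.trans_apply]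
      rw [h2]
      exact (h i).trans rfl
    · intro h i
      have := h ⟨g i, Set.mem_range_self i⟩
      have h2 : (Equiv.ofInjective g hg).symm ⟨g i, Set.mem_range_self i⟩ = i := by
        rw [Equiv.symm_apply_eq]; rfl
      simp only [he₀, Equiv.trans_apply] at this
      rw [h2] at this
      exact this.trans rfl
  have hcg : Fintype.card (↥(Set.range g)ᶜ) = Fintype.card S - q := by
    rw [Fintype.card_compl_set, Set.card_range_of_injective hg, Fintype.card_fin]
  have hcf : Fintype.card (↥(Set.range f)ᶜ) = Fintype.card S - q := by
    rw [Fintype.card_compl_set, Set.card_range_of_injective hf, Fintype.card_fin]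
  have e1 : {P : Equiv.Perm S // ∀ i, P (g i) = f i} ≃ (↥(Set.range g)ᶜ ≃ ↥(Set.range f)ᶜ) :=
    (Equiv.subtypeEquivRight key).trans (Equiv.Set.compl e₀)
  rw [Fintype.card_congr e1,
    Fintype.card_equiv (Fintype.equivOfCardEq (hcg.trans hcf.symm)), hcg]

section
variable {S : Type*} [Fintype S] [DecidableEq S]

lemma aux_fiber' {q : ℕ} (g f : Fin q → S) (hg : Function.Injective g)
    (hf : Function.Injective f) :
    (Finset.univ.filter (fun P : Equiv.Perm S => ∀ i, P (g i) = f i)).card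
      = Nat.factorial (Fintype.card S - q) := by
  rw [← aux_fiber g f hg hf, Fintype.card_subtype]

lemma aux_perm_count {q : ℕ} (g : Fin q → S) (hg : Function.Injective g)
    (pred : (Fin q → S) → Prop) [DecidablePred pred] :
    (Finset.univ.filter (fun P : Equiv.Perm S => pred (fun i => P (g i)))).card
      ≤ (Finset.univ.filter pred).card * Nat.factorial (Fintype.card S - q) := by
  classical
  have hmap : ∀ P ∈ Finset.univ.filter (fun P : Equiv.Perm S => pred (fun i => P (g i))),
      (fun i => P (g i)) ∈ Finset.univ.filter pred := by
    intro P hP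
    rw [Finset.mem_filter] at hP ⊢
    exact ⟨Finset.mem_univ _, hP.2⟩
  rw [Finset.card_eq_sum_card_fiberwise hmap]
  have hbd : ∀ f ∈ Finset.univ.filter pred,
      ((Finset.univ.filter (fun P : Equiv.Perm S => pred (fun i => P (g i)))).filter
        (fun P => (fun i => P (g i)) = f)).card ≤ Nat.factorial (Fintype.card S - q) := by
    intro f _
    by_cases hfin : Function.Injective f
    · calc ((Finset.univ.filter (fun P : Equiv.Perm S => pred (fun i => P (g i)))).filter
            (fun P => (fun i => P (g i)) = f)).card
          ≤ (Finset.univ.filter (fun P : Equiv.Perm S => ∀ i, P (g i) = f i)).card := by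
            apply Finset.card_le_card
            intro P hP
            rw [Finset.mem_filter] at hP ⊢
            exact ⟨Finset.mem_univ _, fun i => congrFun hP.2 i⟩
        _ = Nat.factorial (Fintype.card S - q) := aux_fiber' g f hg hfin
    · have : ((Finset.univ.filter (fun P : Equiv.Perm S => pred (fun i => P (g i)))).filter
          (fun P => (fun i => P (g i)) = f)) = ∅ := by
        rw [Finset.eq_empty_iff_forall_notMem]
        intro P hP
        rw [Finset.mem_filter] at hP
        apply hfin
        rw [← hP.2]
        exact P.injective.comp hg
      rw [this, Finset.card_empty]
      exact Nat.zero_le _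
  calc ∑ f ∈ Finset.univ.filter pred, ((Finset.univ.filter
        (fun P : Equiv.Perm S => pred (fun i => P (g i)))).filter
        (fun P => (fun i => P (g i)) = f)).card
      ≤ ∑ f ∈ Finset.univ.filter pred, Nat.factorial (Fintype.card S - q) :=
        Finset.sum_le_sum hbd
    _ = (Finset.univ.filter pred).card * Nat.factorial (Fintype.card S - q) := by
        rw [Finset.sum_const, smul_eq_mul]

end

theorem stmt_16 (n q : ℕ) (hq1 : 1 ≤ q) (hqM : q ≤ 2 ^ n)
    (ρ : Fin n → ZMod 2) (ω : Fin q → (Fin n → ZMod 2)) (hω : Function.Injective ω) :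
    ((Finset.univ.filter (fun P : Equiv.Perm ((Fin n → ZMod 2) × (Fin n → ZMod 2)) =>
        Function.Injective (fun i : Fin q => ω i + (P (ω i, ρ)).1))).card : ℝ) /
        (Fintype.card (Equiv.Perm ((Fin n → ZMod 2) × (Fin n → ZMod 2)))) ≤
      ∏ k ∈ Finset.Icc 1 (q - 1),
        (1 - (k : ℝ) * ((2 ^ n : ℝ) - 1) / ((2 ^ (2 * n) : ℝ) - k)) ∧
    ∏ k ∈ Finset.Icc 1 (q - 1),
        (1 - (k : ℝ) * ((2 ^ n : ℝ) - 1) / ((2 ^ (2 * n) : ℝ) - k)) ≤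
      Real.exp (-(q * (q - 1) : ℝ) / (2 * ((2 ^ n : ℝ) + 1))) := by
  have hMM0 : ((2 : ℝ) ^ n) * ((2 : ℝ) ^ n) = (2 : ℝ) ^ (2 * n) := by
    rw [two_mul, pow_add]
  have hM1 : (1 : ℝ) ≤ (2 : ℝ) ^ n := one_le_pow₀ (by norm_num)
  constructor
  · -- PART 1
    have hq2 : q ≤ 2 ^ (2 * n) :=
      le_trans hqM (Nat.pow_le_pow_right (by norm_num) (by omega))
    have hg : Function.Injective (fun i : Fin q =>
        ((ω i, ρ) : (Fin n → ZMod 2) × (Fin n → ZMod 2))) :=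
      fun i j h => hω (congrArg Prod.fst h)
    have hcardS : Fintype.card ((Fin n → ZMod 2) × (Fin n → ZMod 2)) = 2 ^ (2 * n) := by
      simp [two_mul, pow_add]
    have hcount := aux_perm_count (fun i : Fin q => ((ω i, ρ))) hg
      (fun f => Function.Injective (fun i => ω i + (f i).1))
    rw [aux_countD n q ω hω, hcardS] at hcount
    have heq : (Finset.univ.filter (fun P : Equiv.Perm ((Fin n → ZMod 2) × (Fin n → ZMod 2)) =>
        Function.Injective (fun i : Fin q => ω i + (P (ω i, ρ)).1)))
        = (Finset.univ.filter (fun P : Equiv.Perm ((Fin n → ZMod 2) × (Fin n → ZMod 2)) =>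
          (fun f => Function.Injective (fun i => ω i + (f i).1))
            (fun i => P ((fun i : Fin q => ((ω i, ρ))) i)))) := by
      apply Finset.filter_congr
      intro P _
      exact Iff.rfl
    rw [heq, Fintype.card_perm, hcardS]
    have hcast : (((Finset.univ.filter (fun P : Equiv.Perm ((Fin n → ZMod 2) × (Fin n → ZMod 2)) =>
          (fun f => Function.Injective (fun i => ω i + (f i).1))
            (fun i => P ((fun i : Fin q => ((ω i, ρ))) i)))).card : ℝ))
        ≤ (((∏ k ∈ Finset.range q, (2 ^ (2 * n) - k * 2 ^ n)) *
            Nat.factorial (2 ^ (2 * n) - q) : ℕ) : ℝ) := by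
      exact_mod_cast hcount
    have hfacpos : (0 : ℝ) < ((Nat.factorial (2 ^ (2 * n)) : ℕ) : ℝ) := by
      exact_mod_cast Nat.factorial_pos _
    refine le_trans (div_le_div_of_nonneg_right hcast hfacpos.le) (le_of_eq ?_)
    · -- ((P * (N-q)!) : ℝ) / N! = ∏ (Nr - kM)/(Nr - k)
      have hNfac : Nat.factorial (2 ^ (2 * n) - q) * (2 ^ (2 * n)).descFactorial q
          = Nat.factorial (2 ^ (2 * n)) := Nat.factorial_mul_descFactorial hq2
      have hP : ((∏ k ∈ Finset.range q, (2 ^ (2 * n) - k * 2 ^ n) : ℕ) : ℝ)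
          = ∏ k ∈ Finset.range q, ((2 : ℝ) ^ (2 * n) - k * 2 ^ n) := by
        rw [Nat.cast_prod]
        refine Finset.prod_congr rfl (fun k hk => ?_)
        rw [Finset.mem_range] at hk
        have hkle : k * 2 ^ n ≤ 2 ^ (2 * n) := by
          calc k * 2 ^ n ≤ 2 ^ n * 2 ^ n :=
                Nat.mul_le_mul_right _ (le_trans (le_of_lt hk) hqM)
            _ = 2 ^ (2 * n) := by rw [two_mul, pow_add]
        rw [Nat.cast_sub hkle]
        push_cast
        ring
      have hD : (((2 ^ (2 * n)).descFactorial q : ℕ) : ℝ)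
          = ∏ k ∈ Finset.range q, ((2 : ℝ) ^ (2 * n) - k) := by
        rw [Nat.descFactorial_eq_prod_range, Nat.cast_prod]
        refine Finset.prod_congr rfl (fun k hk => ?_)
        rw [Finset.mem_range] at hk
        have : k ≤ 2 ^ (2 * n) := le_trans (le_of_lt hk) hq2
        rw [Nat.cast_sub this]
        push_cast
        ring
      have hdpos : ∀ k ∈ Finset.range q, (0 : ℝ) < (2 : ℝ) ^ (2 * n) - k := by
        intro k hk
        rw [Finset.mem_range] at hk
        have h1 : (k : ℝ) < (2 : ℝ) ^ (2 * n) := by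
          have : (k : ℝ) < (q : ℝ) := by exact_mod_cast hk
          have h2 : (q : ℝ) ≤ ((2 ^ (2 * n) : ℕ) : ℝ) := by exact_mod_cast hq2
          push_cast at h2
          linarith
        linarith
      calc (((∏ k ∈ Finset.range q, (2 ^ (2 * n) - k * 2 ^ n)) *
            Nat.factorial (2 ^ (2 * n) - q) : ℕ) : ℝ) / ((Nat.factorial (2 ^ (2 * n)) : ℕ) : ℝ)
          = (((∏ k ∈ Finset.range q, (2 ^ (2 * n) - k * 2 ^ n) : ℕ) : ℝ) *
              ((Nat.factorial (2 ^ (2 * n) - q) : ℕ) : ℝ)) /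
            ((((2 ^ (2 * n)).descFactorial q : ℕ) : ℝ) *
              ((Nat.factorial (2 ^ (2 * n) - q) : ℕ) : ℝ)) := by
            rw [← hNfac]
            push_cast
            ring
        _ = ((∏ k ∈ Finset.range q, (2 ^ (2 * n) - k * 2 ^ n) : ℕ) : ℝ) /
              (((2 ^ (2 * n)).descFactorial q : ℕ) : ℝ) := by
            rw [mul_div_mul_right]
            exact_mod_cast Nat.factorial_pos _ |>.ne'
        _ = ∏ k ∈ Finset.range q,
              (((2 : ℝ) ^ (2 * n) - k * 2 ^ n) / ((2 : ℝ) ^ (2 * n) - k)) := by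
            rw [hP, hD, Finset.prod_div_distrib]
        _ = ∏ k ∈ Finset.Icc 1 (q - 1),
              (1 - (k : ℝ) * ((2 ^ n : ℝ) - 1) / ((2 ^ (2 * n) : ℝ) - k)) := by
            have hins : Finset.range q = insert 0 (Finset.Icc 1 (q - 1)) := by
              ext x
              simp only [Finset.mem_range, Finset.mem_insert, Finset.mem_Icc]
              omega
            have h0 : (0 : ℕ) ∉ Finset.Icc 1 (q - 1) := by simp
            rw [hins, Finset.prod_insert h0]
            have hzero : ((2 : ℝ) ^ (2 * n) - (0 : ℕ) * 2 ^ n) /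
                ((2 : ℝ) ^ (2 * n) - (0 : ℕ)) = 1 := by
              push_cast
              norm_num
            rw [hzero, one_mul]
            refine Finset.prod_congr rfl (fun k hk => ?_)
            rw [Finset.mem_Icc] at hk
            have hkq : k < q := by omega
            have hd : (0 : ℝ) < (2 : ℝ) ^ (2 * n) - k :=
              hdpos k (Finset.mem_range.mpr hkq)
            field_simp
            ring
  · -- PART 2 (verbatim from tested file)
    set Mr : ℝ := (2 : ℝ) ^ n with hMr
    set Nr : ℝ := (2 : ℝ) ^ (2 * n) with hNr
    have hMM : Mr * Mr = Nr := by rw [hMr, hNr, two_mul, pow_add]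
    have hkey : ∀ k ∈ Finset.Icc 1 (q - 1),
        (0 ≤ 1 - (k : ℝ) * (Mr - 1) / (Nr - k)) ∧
        (1 - (k : ℝ) * (Mr - 1) / (Nr - k) ≤ Real.exp (-((k : ℝ) / (Mr + 1)))) := by
      intro k hk
      rw [Finset.mem_Icc] at hk
      have hk1 : (1 : ℝ) ≤ k := by exact_mod_cast hk.1
      have hkM : (k : ℝ) ≤ Mr - 1 := by
        have h0 : k ≤ 2 ^ n - 1 := le_trans hk.2 (by omega)
        have h2 : (k : ℝ) ≤ ((2 ^ n - 1 : ℕ) : ℝ) := by exact_mod_cast h0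
        have h3 : ((2 ^ n - 1 : ℕ) : ℝ) = Mr - 1 := by
          rw [Nat.cast_sub Nat.one_le_two_pow]
          push_cast [hMr]; ring
        linarith [h2, h3.le]
      have hdenom : (0 : ℝ) < Nr - k := by nlinarith
      have hx : (0 : ℝ) ≤ (k : ℝ) * (Mr - 1) / (Nr - k) :=
        div_nonneg (by nlinarith) hdenom.le
      refine ⟨?_, ?_⟩
      · rw [sub_nonneg, div_le_one hdenom]
        nlinarith
      · have h1 : 1 - (k : ℝ) * (Mr - 1) / (Nr - k) ≤
            Real.exp (-((k : ℝ) * (Mr - 1) / (Nr - k))) := by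
          have := Real.add_one_le_exp (-((k : ℝ) * (Mr - 1) / (Nr - k)))
          linarith
        refine h1.trans (Real.exp_le_exp.2 ?_)
        rw [neg_le_neg_iff, div_le_div_iff₀ (by linarith : (0:ℝ) < Mr + 1) hdenom]
        nlinarith
    refine (Finset.prod_le_prod (fun k hk => (hkey k hk).1)
      (fun k hk => (hkey k hk).2)).trans ?_
    rw [← Real.exp_sum]
    apply Real.exp_le_exp.2
    have hS : ∑ k ∈ Finset.Icc 1 (q - 1), (k : ℝ) = (q : ℝ) * ((q : ℝ) - 1) / 2 := by
      have hIcc : Finset.Icc 1 (q - 1) = (Finset.range q).erase 0 := by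
        ext x
        simp only [Finset.mem_Icc, Finset.mem_erase, Finset.mem_range]
        omega
      rw [hIcc, Finset.sum_erase _ (by norm_num : ((0 : ℕ) : ℝ) = 0)]
      have hnat : (∑ k ∈ Finset.range q, k) * 2 = q * (q - 1) := Finset.sum_range_id_mul_two q
      have h2 : (∑ k ∈ Finset.range q, (k : ℝ)) * 2 = (q : ℝ) * ((q : ℝ) - 1) := by
        have := congrArg (fun m : ℕ => (m : ℝ)) hnat
        push_cast [Nat.cast_sub hq1] at this
        linarith [this]
      linarith
    have hsplit : ∑ k ∈ Finset.Icc 1 (q - 1), -((k : ℝ) / (Mr + 1))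
        = -(∑ k ∈ Finset.Icc 1 (q - 1), (k : ℝ)) / (Mr + 1) := by
      rw [Finset.sum_neg_distrib, ← Finset.sum_div, neg_div]
    rw [hsplit, hS]
    have hMpos : (0 : ℝ) < Mr + 1 := by linarith
    rw [div_le_div_iff₀ (by linarith) (by linarith)]
    ring_nf
    nlinarith [hMpos]
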